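/- Let c, c' ∈ ℝ³, r, r' > 0, and let k, k' be unit vectors in ℝ³. The squared quadratic Wasserstein distance between the uniform probability distributions on the circle with center c, radius r, and axis k and on the circle with center c', radius r', and axis k' is at most |c − c'|² + r² + r'² − r r' (1 + |k · k'|). -/

import Mathlib

open MeasureTheory
open scoped RealInnerProductSpace

open scoped ENNReal NNReal

noncomputable section

abbrev E3 := EuclideanSpace ℝ (Fin 3)

/-- Squared quadratic Wasserstein distance, as infimum over couplings. -/
def W2sq {E : Type*} [NormedAddCommGroup E] {mE : MeasurableSpace E}
    (μ ν : Measure E) : ℝ :=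
  sInf {x : ℝ | ∃ π : Measure (E × E),
    π.map Prod.fst = μ ∧ π.map Prod.snd = ν ∧ x = ∫ p, ‖p.1 - p.2‖ ^ 2 ∂π}

/-- The circle in `ℝ³` with center `c`, radius `r` and axis `k`. -/
def circleSet (c : E3) (r : ℝ) (k : E3) : Set E3 :=
  {x | ‖x - c‖ = r ∧ ⟪x - c, k⟫ = 0}

/-- Uniform (normalized arc-length, i.e. 1-dimensional Hausdorff) probability
distribution on the circle with center `c`, radius `r` and axis `k`. -/
def uniformOnCircle (c : E3) (r : ℝ) (k : E3) : Measure E3 :=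
  ((Measure.hausdorffMeasure (d := 1) (circleSet c r k))⁻¹) •
    (Measure.hausdorffMeasure (d := 1)).restrict (circleSet c r k)

lemma finrank_E3 : Module.finrank ℝ E3 = 3 := by simp

lemma exists_unit_orthogonal (a b : E3) :
    ∃ u : E3, ‖u‖ = 1 ∧ ⟪a, u⟫ = 0 ∧ ⟪b, u⟫ = 0 := by
  classical
  have hspan : Module.finrank ℝ (Submodule.span ℝ {a, b}) ≤ 2 := by
    refine le_trans (finrank_span_le_card ({a, b} : Set E3)) ?_
    rw [Set.toFinset_insert, Set.toFinset_singleton]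
    exact (Finset.card_insert_le _ _).trans (by simp)
  have hW : (Submodule.span ℝ ({a, b} : Set E3))ᗮ ≠ ⊥ := by
    intro h
    have := Submodule.finrank_add_finrank_orthogonal (𝕜 := ℝ) (Submodule.span ℝ {a, b})
    rw [finrank_E3, h, finrank_bot] at this
    omega
  obtain ⟨x, hxW, hx0⟩ := Submodule.exists_mem_ne_zero_of_ne_bot hW
  refine ⟨‖x‖⁻¹ • x, ?_, ?_, ?_⟩
  · rw [norm_smul]; simp [norm_ne_zero_iff.2 hx0]
  · have := (Submodule.mem_orthogonal _ _).1 hxW a (Submodule.subset_span (by simp))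
    rw [real_inner_smul_right, this, mul_zero]
  · have := (Submodule.mem_orthogonal _ _).1 hxW b (Submodule.subset_span (by simp))
    rw [real_inner_smul_right, this, mul_zero]

lemma orthonormal_triple {u v w : E3} (hu : ‖u‖ = 1) (hv : ‖v‖ = 1) (hw : ‖w‖ = 1)
    (huv : ⟪u, v⟫ = 0) (huw : ⟪u, w⟫ = 0) (hvw : ⟪v, w⟫ = 0) :
    Orthonormal ℝ ![u, v, w] := by
  have huu : ⟪u, u⟫ = (1 : ℝ) := by rw [real_inner_self_eq_norm_sq, hu]; norm_num
  have hvv : ⟪v, v⟫ = (1 : ℝ) := by rw [real_inner_self_eq_norm_sq, hv]; norm_num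
  have hww : ⟪w, w⟫ = (1 : ℝ) := by rw [real_inner_self_eq_norm_sq, hw]; norm_num
  have hvu : ⟪v, u⟫ = (0:ℝ) := by rw [real_inner_comm]; exact huv
  have hwu : ⟪w, u⟫ = (0:ℝ) := by rw [real_inner_comm]; exact huw
  have hwv : ⟪w, v⟫ = (0:ℝ) := by rw [real_inner_comm]; exact hvw
  rw [orthonormal_iff_ite]
  intro i j
  fin_cases i <;> fin_cases j <;> simp_all

def onb3 {u v w : E3} (h : Orthonormal ℝ ![u, v, w]) : OrthonormalBasis (Fin 3) ℝ E3 :=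
  (basisOfOrthonormalOfCardEqFinrank h (by simp)).toOrthonormalBasis
    (by rwa [coe_basisOfOrthonormalOfCardEqFinrank])

lemma onb3_apply {u v w : E3} (h : Orthonormal ℝ ![u, v, w]) (i : Fin 3) :
    onb3 h i = ![u, v, w] i := by
  simp [onb3, Module.Basis.coe_toOrthonormalBasis, coe_basisOfOrthonormalOfCardEqFinrank]

/-- linear isometry sending one orthonormal triple to another -/
def isom3 {u v w u' v' w' : E3} (h : Orthonormal ℝ ![u, v, w])
    (h' : Orthonormal ℝ ![u', v', w']) : E3 ≃ₗᵢ[ℝ] E3 :=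
  (onb3 h).repr.trans (onb3 h').repr.symm

lemma isom3_apply {u v w u' v' w' : E3} (h : Orthonormal ℝ ![u, v, w])
    (h' : Orthonormal ℝ ![u', v', w']) (i : Fin 3) :
    isom3 h h' (![u, v, w] i) = ![u', v', w'] i := by
  rw [isom3, LinearIsometryEquiv.trans_apply, ← onb3_apply h i, OrthonormalBasis.repr_self,
    OrthonormalBasis.repr_symm_single, onb3_apply]

lemma expand3 {u v w : E3} (h : Orthonormal ℝ ![u, v, w]) (x : E3) :
    x = ⟪u, x⟫ • u + ⟪v, x⟫ • v + ⟪w, x⟫ • w := by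
  have := (onb3 h).sum_repr x
  rw [Fin.sum_univ_three] at this
  simp only [OrthonormalBasis.repr_apply_apply, onb3_apply, Matrix.cons_val_zero,
    Matrix.cons_val_one, Matrix.head_cons, Matrix.cons_val_two, Matrix.tail_cons] at this
  exact this.symm

set_option maxHeartbeats 1000000 in
lemma exists_frame (k k' : E3) (hk : ‖k‖ = 1) (hk' : ‖k'‖ = 1) :
    ∃ (u v : E3) (L Q : E3 ≃ₗᵢ[ℝ] E3),
      ‖u‖ = 1 ∧ ‖v‖ = 1 ∧ ⟪k, u⟫ = 0 ∧ ⟪k, v⟫ = 0 ∧ ⟪u, v⟫ = 0 ∧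
      (L k = k' ∨ L k = -k') ∧ ⟪u, L u⟫ + ⟪v, L v⟫ = 1 + |⟪k, k'⟫| ∧
      Q k = k ∧ Q u = v ∧ Q v = -u ∧
      (∀ x : E3, x = ⟪k, x⟫ • k + ⟪u, x⟫ • u + ⟪v, x⟫ • v) := by
  obtain ⟨u, hu, hku, hk'u⟩ := exists_unit_orthogonal k k'
  obtain ⟨v, hv, hkv, huv⟩ := exists_unit_orthogonal k u
  have hB : Orthonormal ℝ ![k, u, v] := orthonormal_triple hk hu hv hku hkv huv
  have hkk : ⟪k, k⟫ = (1 : ℝ) := by rw [real_inner_self_eq_norm_sq, hk]; norm_num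
  have huu : ⟪u, u⟫ = (1 : ℝ) := by rw [real_inner_self_eq_norm_sq, hu]; norm_num
  have hvv : ⟪v, v⟫ = (1 : ℝ) := by rw [real_inner_self_eq_norm_sq, hv]; norm_num
  have huk : ⟪u, k⟫ = (0 : ℝ) := by rw [real_inner_comm]; exact hku
  have hvk : ⟪v, k⟫ = (0 : ℝ) := by rw [real_inner_comm]; exact hkv
  have hvu : ⟪v, u⟫ = (0 : ℝ) := by rw [real_inner_comm]; exact huv
  have huk' : ⟪u, k'⟫ = (0 : ℝ) := by rw [real_inner_comm]; exact hk'u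
  have hk'exp : k' = ⟪k, k'⟫ • k + ⟪v, k'⟫ • v := by
    have h := expand3 hB k'
    rw [huk'] at h
    simpa using h
  have hαβ : ⟪k, k'⟫ ^ 2 + ⟪v, k'⟫ ^ 2 = 1 := by
    have h0 : ⟪k', k'⟫ = (1 : ℝ) := by rw [real_inner_self_eq_norm_sq, hk']; norm_num
    have h1 : ⟪k', ⟪k, k'⟫ • k + ⟪v, k'⟫ • v⟫ = (1 : ℝ) := by rw [← hk'exp]; exact h0
    simp only [inner_add_right, real_inner_smul_right] at h1
    rw [real_inner_comm k k', real_inner_comm v k'] at h1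
    nlinarith [h1]
  obtain ⟨s, hs1, hs2, hsα⟩ : ∃ s : ℝ, (s = 1 ∨ s = -1) ∧ s * s = 1 ∧
      s * ⟪k, k'⟫ = |⟪k, k'⟫| := by
    rcases le_or_gt 0 ⟪k, k'⟫ with h | h
    · exact ⟨1, Or.inl rfl, by norm_num, by rw [abs_of_nonneg h]; ring⟩
    · exact ⟨-1, Or.inr rfl, by norm_num, by rw [abs_of_neg h]; ring⟩
  have hz1 : ‖s • (⟪k, k'⟫ • v - ⟪v, k'⟫ • k)‖ = 1 := by
    have hzz : ⟪s • (⟪k, k'⟫ • v - ⟪v, k'⟫ • k), s • (⟪k, k'⟫ • v - ⟪v, k'⟫ • k)⟫ = (1 : ℝ) := by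
      simp only [real_inner_smul_left, real_inner_smul_right, inner_sub_left, inner_sub_right,
        hkk, huu, hvv, hkv, hvk]
      nlinarith [hs2, hαβ]
    have hn : ‖s • (⟪k, k'⟫ • v - ⟪v, k'⟫ • k)‖ ^ 2 = 1 := by
      rw [← real_inner_self_eq_norm_sq, hzz]
    nlinarith [norm_nonneg (s • (⟪k, k'⟫ • v - ⟪v, k'⟫ • k))]
  have hsk' : ‖s • k'‖ = 1 := by
    rw [norm_smul, hk']
    rcases hs1 with h | h <;> rw [h] <;> norm_num
  have hik'u : ⟪s • k', u⟫ = (0 : ℝ) := by rw [real_inner_smul_left, hk'u, mul_zero]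
  have hik'z : ⟪s • k', s • (⟪k, k'⟫ • v - ⟪v, k'⟫ • k)⟫ = (0 : ℝ) := by
    simp only [real_inner_smul_left, real_inner_smul_right, inner_sub_right]
    rw [real_inner_comm v k', real_inner_comm k k']
    ring
  have hiuz : ⟪u, s • (⟪k, k'⟫ • v - ⟪v, k'⟫ • k)⟫ = (0 : ℝ) := by
    simp only [real_inner_smul_right, inner_sub_right, huv, huk]
    ring
  have hB' : Orthonormal ℝ ![s • k', u, s • (⟪k, k'⟫ • v - ⟪v, k'⟫ • k)] :=
    orthonormal_triple hsk' hu hz1 hik'u hik'z hiuz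
  have hnegu : ‖-u‖ = 1 := by rwa [norm_neg]
  have hknu : ⟪k, -u⟫ = (0 : ℝ) := by rw [inner_neg_right, hku, neg_zero]
  have hvnu : ⟪v, -u⟫ = (0 : ℝ) := by rw [inner_neg_right, hvu, neg_zero]
  have hBQ : Orthonormal ℝ ![k, v, -u] := orthonormal_triple hk hv hnegu hkv hknu hvnu
  refine ⟨u, v, isom3 hB hB', isom3 hB hBQ, hu, hv, hku, hkv, huv, ?_, ?_, ?_, ?_, ?_, ?_⟩
  · have h0 := isom3_apply hB hB' 0
    simp only [Matrix.cons_val_zero] at h0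
    rcases hs1 with h | h
    · left; rw [h0, h, one_smul]
    · right; rw [h0, h, neg_smul, one_smul]
  · have h1 := isom3_apply hB hB' 1
    have h2 := isom3_apply hB hB' 2
    simp only [Matrix.cons_val_one, Matrix.head_cons, Matrix.cons_val_two,
      Matrix.tail_cons, Matrix.cons_val_zero] at h1 h2
    rw [h1, h2, huu]
    have hvz : ⟪v, s • (⟪k, k'⟫ • v - ⟪v, k'⟫ • k)⟫ = |⟪k, k'⟫| := by
      simp only [real_inner_smul_right, inner_sub_right, hvv, hvk]
      rw [← hsα]; ring
    rw [hvz]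
  · have h0 := isom3_apply hB hBQ 0
    simpa using h0
  · have h1 := isom3_apply hB hBQ 1
    simpa using h1
  · have h2 := isom3_apply hB hBQ 2
    simpa using h2
  · intro x
    exact expand3 hB x

def simMap (c c' : E3) (ρ : ℝ) (L : E3 ≃ₗᵢ[ℝ] E3) : E3 → E3 := fun x => c' + ρ • L (x - c)

lemma simMap_continuous (c c' : E3) (ρ : ℝ) (L : E3 ≃ₗᵢ[ℝ] E3) :
    Continuous (simMap c c' ρ L) := by
  unfold simMap; fun_prop

lemma simMap_leftInv (c c' : E3) (ρ : ℝ) (hρ : ρ ≠ 0) (L : E3 ≃ₗᵢ[ℝ] E3) (x : E3) :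
    simMap c' c ρ⁻¹ L.symm (simMap c c' ρ L x) = x := by
  unfold simMap
  rw [add_sub_cancel_left, _root_.map_smul, LinearIsometryEquiv.symm_apply_apply, smul_smul,
    inv_mul_cancel₀ hρ, one_smul, add_sub_cancel]

lemma simMap_rightInv (c c' : E3) (ρ : ℝ) (hρ : ρ ≠ 0) (L : E3 ≃ₗᵢ[ℝ] E3) (x : E3) :
    simMap c c' ρ L (simMap c' c ρ⁻¹ L.symm x) = x := by
  have := simMap_leftInv c' c ρ⁻¹ (inv_ne_zero hρ) L.symm x
  rwa [inv_inv, LinearIsometryEquiv.symm_symm] at this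

lemma simMap_injective (c c' : E3) (ρ : ℝ) (hρ : ρ ≠ 0) (L : E3 ≃ₗᵢ[ℝ] E3) :
    Function.Injective (simMap c c' ρ L) :=
  Function.LeftInverse.injective (simMap_leftInv c c' ρ hρ L)

lemma simMap_preimage (c c' : E3) (ρ : ℝ) (hρ : ρ ≠ 0) (L : E3 ≃ₗᵢ[ℝ] E3) (X : Set E3) :
    simMap c c' ρ L ⁻¹' X = simMap c' c ρ⁻¹ L.symm '' X := by
  ext y
  constructor
  · intro hy
    exact ⟨simMap c c' ρ L y, hy, simMap_leftInv c c' ρ hρ L y⟩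
  · rintro ⟨x, hx, rfl⟩
    simpa [Set.mem_preimage, simMap_rightInv c c' ρ hρ L x] using hx

lemma simMap_image_h (c c' : E3) (ρ : ℝ) (hρ : ρ ≠ 0) (L : E3 ≃ₗᵢ[ℝ] E3) (A : Set E3) :
    μH[1] (simMap c c' ρ L '' A) = (‖ρ‖₊ : ℝ≥0∞) * μH[1] A := by
  have h1 : simMap c c' ρ L '' A
      = (fun y => c' + y) '' ((fun y : E3 => ρ • y) '' ((fun y => L y) '' ((fun x => x - c) '' A))) := by
    simp only [Set.image_image]; rfl
  have hiso1 : Isometry (fun y : E3 => c' + y) := Isometry.of_dist_eq fun a b => dist_add_left c' a b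
  have hiso2 : Isometry (fun x : E3 => x - c) := Isometry.of_dist_eq fun a b => by
    simp [dist_eq_norm]
  rw [h1, hiso1.hausdorffMeasure_image (Or.inl zero_le_one), Set.image_smul,
    Measure.hausdorffMeasure_smul₀ zero_le_one hρ,
    L.isometry.hausdorffMeasure_image (Or.inl zero_le_one),
    hiso2.hausdorffMeasure_image (Or.inl zero_le_one)]
  simp [ENNReal.smul_def]

lemma map_unif (c c' : E3) (ρ : ℝ) (hρ : ρ ≠ 0) (L : E3 ≃ₗᵢ[ℝ] E3) (S S' : Set E3)
    (hS : simMap c c' ρ L '' S = S') :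
    Measure.map (simMap c c' ρ L) ((μH[1] S)⁻¹ • (μH[1]).restrict S)
      = (μH[1] S')⁻¹ • (μH[1]).restrict S' := by
  have hmeas : Measurable (simMap c c' ρ L) := (simMap_continuous c c' ρ L).measurable
  have hSpre : simMap c c' ρ L ⁻¹' S' = S := by
    rw [← hS, Set.preimage_image_eq _ (simMap_injective c c' ρ hρ L)]
  have hS'm : μH[1] S' = (‖ρ‖₊ : ℝ≥0∞) * μH[1] S := by rw [← hS, simMap_image_h c c' ρ hρ L]
  have hρ0 : (‖ρ‖₊ : ℝ≥0∞) ≠ 0 := by simpa using hρ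
  have hρtop : (‖ρ‖₊ : ℝ≥0∞) ≠ ⊤ := ENNReal.coe_ne_top
  rw [Measure.map_smul]
  refine Measure.ext fun B hB => ?_
  rw [Measure.smul_apply, Measure.smul_apply, Measure.map_apply hmeas hB,
    Measure.restrict_apply (hmeas hB), Measure.restrict_apply hB]
  have hkey : simMap c c' ρ L ⁻¹' B ∩ S = simMap c c' ρ L ⁻¹' (B ∩ S') := by
    rw [Set.preimage_inter, hSpre]
  rw [hkey, simMap_preimage c c' ρ hρ L, simMap_image_h c' c ρ⁻¹ (inv_ne_zero hρ) L.symm,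
    hS'm, ENNReal.mul_inv (Or.inl hρ0) (Or.inl hρtop)]
  have : (‖ρ⁻¹‖₊ : ℝ≥0∞) = (‖ρ‖₊ : ℝ≥0∞)⁻¹ := by
    rw [nnnorm_inv, ENNReal.coe_inv (by simpa using hρ)]
  rw [this, smul_eq_mul, smul_eq_mul]
  ring

lemma simMap_image_circle (c c' : E3) (ρ : ℝ) (hρ : 0 < ρ) (L : E3 ≃ₗᵢ[ℝ] E3)
    (k k'' : E3) (hL : L k = k'' ∨ L k = -k'') (r : ℝ) (hr : 0 ≤ r) :
    simMap c c' ρ L '' circleSet c r k = circleSet c' (ρ * r) k'' := by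
  have hinner : ∀ w : E3, ⟪w, k⟫ = 0 → ⟪L w, k''⟫ = 0 := by
    intro w hw
    rcases hL with h | h
    · rw [← h, LinearIsometryEquiv.inner_map_map, hw]
    · have : k'' = -(L k) := by rw [h, neg_neg]
      rw [this, inner_neg_right, LinearIsometryEquiv.inner_map_map, hw, neg_zero]
  have hinner' : ∀ z : E3, ⟪z, k''⟫ = 0 → ⟪L.symm z, k⟫ = 0 := by
    intro z hz
    have h1 : ⟪L.symm z, k⟫ = ⟪z, L k⟫ := by
      rw [← LinearIsometryEquiv.inner_map_map L, LinearIsometryEquiv.apply_symm_apply]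
    rcases hL with h | h
    · rw [h1, h, hz]
    · rw [h1, h, inner_neg_right, hz, neg_zero]
  ext y
  simp only [Set.mem_image, circleSet, Set.mem_setOf_eq]
  constructor
  · rintro ⟨x, ⟨hx1, hx2⟩, rfl⟩
    unfold simMap
    rw [add_sub_cancel_left]
    constructor
    · rw [norm_smul, L.norm_map, hx1, Real.norm_eq_abs, abs_of_pos hρ]
    · rw [real_inner_smul_left, hinner _ hx2, mul_zero]
  · rintro ⟨hy1, hy2⟩
    refine ⟨simMap c' c ρ⁻¹ L.symm y, ⟨?_, ?_⟩, simMap_rightInv c c' ρ (ne_of_gt hρ) L y⟩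
    · unfold simMap
      rw [add_sub_cancel_left, norm_smul, LinearIsometryEquiv.norm_map, hy1, Real.norm_eq_abs,
        abs_of_pos (inv_pos.2 hρ)]
      field_simp
    · unfold simMap
      rw [add_sub_cancel_left, real_inner_smul_left, hinner' _ hy2, mul_zero]

lemma four_point (Δ u v u' v' : E3)
    (huu : ⟪u, u⟫ = (1:ℝ)) (hvv : ⟪v, v⟫ = (1:ℝ)) (huv : ⟪u, v⟫ = (0:ℝ))
    (hu'u' : ⟪u', u'⟫ = (1:ℝ)) (hv'v' : ⟪v', v'⟫ = (1:ℝ)) (hu'v' : ⟪u', v'⟫ = (0:ℝ))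
    (a b ρ : ℝ) :
    ‖Δ + ((a • u + b • v) - ρ • (a • u' + b • v'))‖ ^ 2
    + ‖Δ + ((a • v - b • u) - ρ • (a • v' - b • u'))‖ ^ 2
    + ‖Δ + (-(a • u + b • v) - ρ • (-(a • u' + b • v')))‖ ^ 2
    + ‖Δ + (-(a • v - b • u) - ρ • (-(a • v' - b • u')))‖ ^ 2
    = 4 * ‖Δ‖ ^ 2 + 4 * (1 + ρ ^ 2) * (a ^ 2 + b ^ 2)
      - 4 * ρ * (a ^ 2 + b ^ 2) * (⟪u, u'⟫ + ⟪v, v'⟫) := by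
  have comm : ∀ x y : E3, ⟪x, y⟫ = ⟪y, x⟫ := fun x y => real_inner_comm y x
  simp only [← real_inner_self_eq_norm_sq]
  simp only [inner_add_left, inner_add_right, inner_sub_left, inner_sub_right,
    inner_neg_left, inner_neg_right, real_inner_smul_left, real_inner_smul_right]
  simp only [comm u Δ, comm v Δ, comm u' Δ, comm v' Δ, comm v u, comm v' u', comm u' u,
    comm v' u, comm u' v, comm v' v]
  rw [huu, hvv, huv, hu'u', hv'v', hu'v']
  ring

set_option maxHeartbeats 2000000 in
theorem w2sq_uniformOnCircle_le (c c' : E3) (r r' : ℝ) (hr : 0 < r) (hr' : 0 < r')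
    (k k' : E3) (hk : ‖k‖ = 1) (hk' : ‖k'‖ = 1) :
    W2sq (uniformOnCircle c r k) (uniformOnCircle c' r' k') ≤
      ‖c - c'‖ ^ 2 + r ^ 2 + r' ^ 2 - r * r' * (1 + |⟪k, k'⟫|) := by
  classical
  obtain ⟨u, v, L, Q, hu, hv, hku, hkv, huv, hLk, hsum, hQk, hQu, hQv, hexp⟩ :=
    exists_frame k k' hk hk'
  set K : ℝ := ‖c - c'‖ ^ 2 + r ^ 2 + r' ^ 2 - r * r' * (1 + |⟪k, k'⟫|) with hK
  have hκ : |⟪k, k'⟫| ≤ 1 := by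
    have := abs_real_inner_le_norm k k'
    rwa [hk, hk', one_mul] at this
  have hK0 : 0 ≤ K := by
    rw [hK]
    nlinarith [sq_nonneg (r - r'), sq_nonneg (‖c - c'‖), mul_pos hr hr',
      abs_nonneg ⟪k, k'⟫]
  have hρ : 0 < r' / r := div_pos hr' hr
  set f : E3 → E3 := simMap c c' (r' / r) L with hf
  set R : E3 → E3 := simMap c c 1 Q with hR
  have hfS : f '' circleSet c r k = circleSet c' r' k' := by
    have h := simMap_image_circle c c' (r' / r) hρ L k k' hLk r hr.le
    rwa [div_mul_cancel₀ _ (ne_of_gt hr)] at h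
  have hRS : R '' circleSet c r k = circleSet c r k := by
    have h := simMap_image_circle c c 1 one_pos Q k k (Or.inl hQk) r hr.le
    rwa [one_mul] at h
  set μ : Measure E3 := uniformOnCircle c r k with hμ
  have hmapf : μ.map f = uniformOnCircle c' r' k' :=
    map_unif c c' (r' / r) (ne_of_gt hρ) L _ _ hfS
  have hmapR : μ.map R = μ :=
    map_unif c c 1 one_ne_zero Q _ _ hRS
  have hcf : Continuous f := simMap_continuous c c' (r' / r) L
  have hcR : Continuous R := simMap_continuous c c 1 Q
  have hmf : Measurable f := hcf.measurable
  have hmR : Measurable R := hcR.measurable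
  -- basic measure facts
  have hμuniv : μ Set.univ ≤ 1 := by
    rw [hμ]
    unfold uniformOnCircle
    rw [Measure.smul_apply, Measure.restrict_apply MeasurableSet.univ, Set.univ_inter,
      smul_eq_mul]
    exact ENNReal.inv_mul_le_one _
  have hfinite : IsFiniteMeasure μ := ⟨lt_of_le_of_lt hμuniv ENNReal.one_lt_top⟩
  have hSclosed : IsClosed (circleSet c r k) := by
    have h1 : circleSet c r k
        = (fun x : E3 => ‖x - c‖) ⁻¹' {r} ∩ (fun x : E3 => ⟪x - c, k⟫) ⁻¹' {0} := by
      ext x; simp [circleSet]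
    rw [h1]
    exact (isClosed_singleton.preimage ((continuous_id.sub continuous_const).norm)).inter
      (isClosed_singleton.preimage ((continuous_id.sub continuous_const).inner continuous_const))
  have hSmeas : MeasurableSet (circleSet c r k) := hSclosed.measurableSet
  have hcompl : μ (circleSet c r k)ᶜ = 0 := by
    rw [hμ]
    unfold uniformOnCircle
    rw [Measure.smul_apply, Measure.restrict_apply hSmeas.compl]
    simp
  have hae : ∀ᵐ x ∂μ, x ∈ circleSet c r k := mem_ae_iff.mpr (by simpa using hcompl)
  -- transport identity for the map x ↦ y - f y
  have hT : ∀ y : E3, y - f y = (c - c') + ((y - c) - (r' / r) • L (y - c)) := by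
    intro y
    rw [hf]
    unfold simMap
    abel
  have hRsub : ∀ y : E3, R y - c = Q (y - c) := by
    intro y
    rw [hR]
    unfold simMap
    rw [one_smul, add_sub_cancel_left]
  have hRmem : ∀ x ∈ circleSet c r k, R x ∈ circleSet c r k := by
    intro x hx
    rw [← hRS]
    exact ⟨x, hx, rfl⟩
  -- pointwise four-point identity on the circle
  have hpoint : ∀ x ∈ circleSet c r k,
      ‖x - f x‖ ^ 2 + ‖R x - f (R x)‖ ^ 2 + ‖R (R x) - f (R (R x))‖ ^ 2
        + ‖R (R (R x)) - f (R (R (R x)))‖ ^ 2 = 4 * K := by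
    intro x hx
    obtain ⟨hx1, hx2⟩ := hx
    have hkw : ⟪k, x - c⟫ = 0 := by rw [real_inner_comm]; exact hx2
    have hw : x - c = ⟪u, x - c⟫ • u + ⟪v, x - c⟫ • v := by
      have h := hexp (x - c)
      rw [hkw] at h
      simpa using h
    set a : ℝ := ⟪u, x - c⟫ with ha
    set b : ℝ := ⟪v, x - c⟫ with hb
    have huu1 : ⟪u, u⟫ = (1:ℝ) := by rw [real_inner_self_eq_norm_sq, hu]; norm_num
    have hvv1 : ⟪v, v⟫ = (1:ℝ) := by rw [real_inner_self_eq_norm_sq, hv]; norm_num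
    have hab : a ^ 2 + b ^ 2 = r ^ 2 := by
      have h1 : ⟪x - c, x - c⟫ = r ^ 2 := by rw [real_inner_self_eq_norm_sq, hx1]
      nth_rewrite 1 [hw] at h1
      rw [inner_add_left, real_inner_smul_left, real_inner_smul_left, ← ha, ← hb] at h1
      nlinarith [h1]
    -- inner product facts for L u, L v
    have hLuu : ⟪L u, L u⟫ = (1:ℝ) := by rw [LinearIsometryEquiv.inner_map_map]; exact huu1
    have hLvv : ⟪L v, L v⟫ = (1:ℝ) := by rw [LinearIsometryEquiv.inner_map_map]; exact hvv1
    have hLuv : ⟪L u, L v⟫ = (0:ℝ) := by rw [LinearIsometryEquiv.inner_map_map]; exact huv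
    -- the four displaced vectors
    have hQw' : Q (a • u + b • v) = a • v - b • u := by
      rw [map_add, _root_.map_smul, _root_.map_smul, hQu, hQv]
      module
    have hQw : Q (x - c) = a • v - b • u := by rw [hw, hQw']
    have hQQw : Q (Q (x - c)) = -(a • u + b • v) := by
      rw [hQw, map_sub, _root_.map_smul, _root_.map_smul, hQv, hQu]
      module
    have hQ3 : Q (Q (Q (x - c))) = -(a • v - b • u) := by
      rw [hQQw, map_neg, hQw']
    have hv0 : x - f x
        = (c - c') + ((a • u + b • v) - (r' / r) • (a • L u + b • L v)) := by
      rw [hT x, hw, map_add, _root_.map_smul, _root_.map_smul]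
    have hv1 : R x - f (R x)
        = (c - c') + ((a • v - b • u) - (r' / r) • (a • L v - b • L u)) := by
      rw [hT (R x), hRsub x, hQw, map_sub, _root_.map_smul, _root_.map_smul]
    have hv2 : R (R x) - f (R (R x))
        = (c - c') + (-(a • u + b • v) - (r' / r) • (-(a • L u + b • L v))) := by
      rw [hT (R (R x)), hRsub (R x), hRsub x, hQQw, map_neg, map_add,
        _root_.map_smul, _root_.map_smul]
    have hv3 : R (R (R x)) - f (R (R (R x)))
        = (c - c') + (-(a • v - b • u) - (r' / r) • (-(a • L v - b • L u))) := by
      rw [hT (R (R (R x))), hRsub (R (R x)), hRsub (R x), hRsub x, hQ3, map_neg, map_sub,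
        _root_.map_smul, _root_.map_smul]
    rw [hv0, hv1, hv2, hv3,
      four_point (c - c') u v (L u) (L v) huu1 hvv1 huv hLuu hLvv hLuv a b (r' / r),
      hab, hsum, hK]
    have hrne : r ≠ 0 := ne_of_gt hr
    field_simp
    ring
  -- uniform bound on the circle
  set C : ℝ := (‖c - c'‖ + (r + r')) ^ 2 with hC
  have hbound : ∀ y ∈ circleSet c r k, ‖y - f y‖ ^ 2 ≤ C := by
    intro y hy
    obtain ⟨hy1, _⟩ := hy
    have h1 : ‖y - f y‖ ≤ ‖c - c'‖ + (r + r') := by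
      rw [hT y]
      refine (norm_add_le _ _).trans (add_le_add le_rfl ?_)
      refine (norm_sub_le _ _).trans ?_
      rw [hy1, norm_smul, LinearIsometryEquiv.norm_map, hy1, Real.norm_eq_abs,
        abs_of_pos hρ, div_mul_cancel₀ _ (ne_of_gt hr)]
    have h0 : (0:ℝ) ≤ ‖y - f y‖ := norm_nonneg _
    rw [hC]
    nlinarith [h1]
  have hint : ∀ g : E3 → E3, Continuous g → (∀ x ∈ circleSet c r k, g x ∈ circleSet c r k) →
      Integrable (fun x => ‖g x - f (g x)‖ ^ 2) μ := by
    intro g hg hgS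
    refine Integrable.mono' (integrable_const C)
      (((hg.sub (hcf.comp hg)).norm.pow 2).aestronglyMeasurable) ?_
    filter_upwards [hae] with x hx
    rw [Real.norm_of_nonneg (by positivity)]
    exact hbound _ (hgS x hx)
  have hinv : ∀ φ : E3 → ℝ, Continuous φ → ∫ x, φ x ∂μ = ∫ x, φ (R x) ∂μ := by
    intro φ hφ
    conv_lhs => rw [← hmapR]
    exact integral_map hmR.aemeasurable (by rw [hmapR]; exact hφ.aestronglyMeasurable)
  set φ0 : E3 → ℝ := fun x => ‖x - f x‖ ^ 2 with hφ0
  have hφ0c : Continuous φ0 := (continuous_id.sub hcf).norm.pow 2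
  have hI0 : Integrable φ0 μ := hint id continuous_id (fun x hx => hx)
  have hI1 : Integrable (fun x => φ0 (R x)) μ := hint R hcR hRmem
  have hI2 : Integrable (fun x => φ0 (R (R x))) μ :=
    hint (fun x => R (R x)) (hcR.comp hcR) (fun x hx => hRmem _ (hRmem _ hx))
  have hI3 : Integrable (fun x => φ0 (R (R (R x)))) μ :=
    hint (fun x => R (R (R x))) (hcR.comp (hcR.comp hcR))
      (fun x hx => hRmem _ (hRmem _ (hRmem _ hx)))
  have hE1 : ∫ x, φ0 x ∂μ = ∫ x, φ0 (R x) ∂μ := hinv φ0 hφ0c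
  have hE2 : ∫ x, φ0 (R x) ∂μ = ∫ x, φ0 (R (R x)) ∂μ := hinv (fun x => φ0 (R x)) (hφ0c.comp hcR)
  have hE3 : ∫ x, φ0 (R (R x)) ∂μ = ∫ x, φ0 (R (R (R x))) ∂μ :=
    hinv (fun x => φ0 (R (R x))) (hφ0c.comp (hcR.comp hcR))
  have hsplit : ∫ x, (φ0 x + φ0 (R x) + φ0 (R (R x)) + φ0 (R (R (R x)))) ∂μ
      = 4 * ∫ x, φ0 x ∂μ := by
    have e1 : Integrable (fun x => φ0 x + φ0 (R x)) μ := hI0.add hI1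
    have e2 : Integrable (fun x => φ0 x + φ0 (R x) + φ0 (R (R x))) μ := e1.add hI2
    have h12 : ∫ x, (φ0 x + φ0 (R x)) ∂μ = (∫ x, φ0 x ∂μ) + ∫ x, φ0 (R x) ∂μ :=
      integral_add hI0 hI1
    have h123 : ∫ x, (φ0 x + φ0 (R x) + φ0 (R (R x))) ∂μ
        = (∫ x, (φ0 x + φ0 (R x)) ∂μ) + ∫ x, φ0 (R (R x)) ∂μ := integral_add e1 hI2
    have h1234 : ∫ x, (φ0 x + φ0 (R x) + φ0 (R (R x)) + φ0 (R (R (R x)))) ∂μ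
        = (∫ x, (φ0 x + φ0 (R x) + φ0 (R (R x))) ∂μ) + ∫ x, φ0 (R (R (R x))) ∂μ :=
      integral_add e2 hI3
    rw [h1234, h123, h12, ← hE1, ← hE2, ← hE1, ← hE3, ← hE2, ← hE1]
    ring
  have hcongr : ∫ x, (φ0 x + φ0 (R x) + φ0 (R (R x)) + φ0 (R (R (R x)))) ∂μ
      = ∫ _x, (4 * K) ∂μ := by
    refine integral_congr_ae ?_
    filter_upwards [hae] with x hx
    exact hpoint x hx
  have htoReal : (μ Set.univ).toReal ≤ 1 := by
    have := ENNReal.toReal_mono ENNReal.one_ne_top hμuniv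
    simpa using this
  have hIK : ∫ x, φ0 x ∂μ ≤ K := by
    have h4 : 4 * ∫ x, φ0 x ∂μ ≤ 4 * K := by
      rw [← hsplit, hcongr, integral_const, smul_eq_mul]
      calc (μ Set.univ).toReal * (4 * K) ≤ 1 * (4 * K) := by
            apply mul_le_mul_of_nonneg_right htoReal (by linarith)
      _ = 4 * K := by ring
    linarith
  -- the coupling
  set g : E3 → E3 × E3 := fun x => (x, f x) with hg
  have hgm : Measurable g := measurable_id.prodMk hmf
  have hfst : (μ.map g).map Prod.fst = μ := by
    rw [Measure.map_map measurable_fst hgm]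
    have : Prod.fst ∘ g = id := rfl
    rw [this, Measure.map_id]
  have hsnd : (μ.map g).map Prod.snd = uniformOnCircle c' r' k' := by
    rw [Measure.map_map measurable_snd hgm]
    have : Prod.snd ∘ g = f := rfl
    rw [this, hmapf]
  have hcost : ∫ p, ‖p.1 - p.2‖ ^ 2 ∂(μ.map g) = ∫ x, φ0 x ∂μ := by
    rw [integral_map (f := fun p : E3 × E3 => ‖p.1 - p.2‖ ^ 2) hgm.aemeasurable
      (((continuous_fst.sub continuous_snd).norm.pow 2).aestronglyMeasurable)]
  have hbdd : BddBelow {x : ℝ | ∃ π : Measure (E3 × E3),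
      π.map Prod.fst = μ ∧ π.map Prod.snd = uniformOnCircle c' r' k' ∧
      x = ∫ p, ‖p.1 - p.2‖ ^ 2 ∂π} := by
    refine ⟨0, fun t ht => ?_⟩
    obtain ⟨π, _, _, h⟩ := ht
    rw [h]
    exact integral_nonneg fun p => by positivity
  have hW : W2sq μ (uniformOnCircle c' r' k') ≤ ∫ x, φ0 x ∂μ := by
    apply csInf_le hbdd
    exact ⟨μ.map g, hfst, hsnd, hcost.symm⟩
  exact le_trans hW hIK

end
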